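/- arXiv:2109.06345 — 3 statements merged into one kernel-verified Lean document; each statement's English description precedes it below -/
import Mathlib

section
/- Let f be analytic in D₁ = D_{ρ,σ} with finite weighted Fourier norm ‖f‖₁. Then for every 0 < d < 1 and every 1 ≤ j ≤ n one has ‖∂f/∂q_j‖_{1−d} ≤ ‖f‖₁ / (e d σ), where e is Euler's number. -/
open scoped BigOperators ENNReal
open Real

namespace KAMStmt

variable {n : ℕ}

/-- ℓ¹ norm of an integer vector `k`. -/
def znorm (k : Fin n → ℤ) : ℕ := ∑ j, (k j).natAbs

/-- Complex polydisc of radius `ρ` around a center `c`. -/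
def polydisc (ρ : ℝ) (c : Fin n → ℂ) : Set (Fin n → ℂ) :=
  {z | ∀ j, ‖z j - c j‖ < ρ}

/-- Complex extension `G_ρ` of a real set `G ⊆ ℝⁿ`. -/
def Gext (G : Set (Fin n → ℝ)) (ρ : ℝ) : Set (Fin n → ℂ) :=
  ⋃ p ∈ G, polydisc ρ (fun j => (p j : ℂ))

/-- Complex extension `Tⁿ_σ` of the torus. -/
def torusExt (n : ℕ) (σ : ℝ) : Set (Fin n → ℂ) :=
  {q | ∀ j, |(q j).im| < σ}

/-- `k·q` with `k ∈ ℤⁿ`, `q ∈ ℂⁿ`. -/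
noncomputable def zdotC (k : Fin n → ℤ) (q : Fin n → ℂ) : ℂ := ∑ j, (k j : ℂ) * q j

/-- `k·ω` with `k ∈ ℤⁿ`, `ω ∈ ℝⁿ`. -/
def zdotR (k : Fin n → ℤ) (ω : Fin n → ℝ) : ℝ := ∑ j, (k j : ℝ) * ω j

/-- Diophantine condition `|k·ω| > γ |k|^{-τ}` for all `k ≠ 0`. -/
def Diophantine (ω : Fin n → ℝ) (γ τ : ℝ) : Prop :=
  ∀ k : Fin n → ℤ, k ≠ 0 → γ * (znorm k : ℝ) ^ (-τ) < |zdotR k ω|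

/-- Families of Fourier coefficients `f_k(p)` of a function `f(p,q) = Σ_k f_k(p) e^{i k·q}`. -/
abbrev Coeffs (n : ℕ) := (Fin n → ℤ) → (Fin n → ℂ) → ℂ

/-- sup of `‖g‖` over a set, in `ℝ≥0∞`. -/
noncomputable def supE (S : Set (Fin n → ℂ)) (g : (Fin n → ℂ) → ℂ) : ℝ≥0∞ :=
  ⨆ p ∈ S, (‖g p‖₊ : ℝ≥0∞)

/-- weighted Fourier norm `‖f‖_{ρ,σ} = Σ_k |f_k|_ρ e^{|k|σ}` (sup over `G_ρ`). -/
noncomputable def wnorm (G : Set (Fin n → ℝ)) (F : Coeffs n) (ρ σ : ℝ) : ℝ≥0∞ :=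
  ∑' k : Fin n → ℤ, supE (Gext G ρ) (F k) * ENNReal.ofReal (Real.exp ((znorm k : ℝ) * σ))

/-- partial derivative `∂g/∂p_j`. -/
noncomputable def pder (j : Fin n) (g : (Fin n → ℂ) → ℂ) : (Fin n → ℂ) → ℂ :=
  fun p => fderiv ℂ g p (Pi.single j 1)

/-- Fourier coefficients of the Poisson bracket
`{f,g} = Σ_j (∂f/∂p_j ∂g/∂q_j − ∂f/∂q_j ∂g/∂p_j)`. -/
noncomputable def pbC (F Gc : Coeffs n) : Coeffs n := fun k p =>
  ∑' k₁ : Fin n → ℤ, ∑ j,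
    (pder j (F k₁) p * (Complex.I * ((k j - k₁ j : ℤ) : ℂ)) * Gc (k - k₁) p
      - Complex.I * ((k₁ j : ℤ) : ℂ) * F k₁ p * pder j (Gc (k - k₁)) p)

/-- Lie derivative `L_X g = {g, X}` at the level of Fourier coefficients. -/
noncomputable def lieC (X g : Coeffs n) : Coeffs n := pbC g X

/-- iterated Lie derivative `L_X^s`. -/
noncomputable def lieIter (X : Coeffs n) (s : ℕ) (g : Coeffs n) : Coeffs n := (lieC X)^[s] g

/-- the class `P_l`: homogeneous of degree `l` in the actions `p`. -/
def InP (l : ℕ) (F : Coeffs n) : Prop :=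
  ∀ (k : Fin n → ℤ) (t : ℂ) (p : Fin n → ℂ), F k (t • p) = t ^ l * F k p

/-- standard symplectic form on `ℂⁿ × ℂⁿ`. -/
noncomputable def sympForm (u v : (Fin n → ℂ) × (Fin n → ℂ)) : ℂ :=
  ∑ j, (u.1 j * v.2 j - u.2 j * v.1 j)

/-- canonical (holomorphic symplectic) map on a domain `D`. -/
def IsCanonicalOn (D : Set ((Fin n → ℂ) × (Fin n → ℂ)))
    (C : (Fin n → ℂ) × (Fin n → ℂ) → (Fin n → ℂ) × (Fin n → ℂ)) : Prop :=
  DifferentiableOn ℂ C D ∧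
  ∀ z ∈ D, ∀ u v, sympForm (fderiv ℂ C z u) (fderiv ℂ C z v) = sympForm u v



lemma exp_mul_le {x : ℝ} (hx : 0 ≤ x) : Real.exp 1 * x ≤ Real.exp x := by
  have h := Real.add_one_le_exp (x - 1)
  have : x ≤ Real.exp (x - 1) := by linarith
  calc Real.exp 1 * x ≤ Real.exp 1 * Real.exp (x - 1) := by
        exact mul_le_mul_of_nonneg_left this (le_of_lt (Real.exp_pos 1))
    _ = Real.exp x := by rw [← Real.exp_add]; ring_nf

/-- Lemma 4.1.i, second part: Cauchy estimate for `∂f/∂q_j`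
(whose Fourier coefficients are `i k_j F_k(p)`):
if `f(p,q) = Σ_k F_k(p) e^{i k·q}` is analytic in `D₁ = D_{ρ,σ}` with finite weighted
Fourier norm, then `‖∂f/∂q_j‖_{1−d} ≤ ‖f‖₁/(e d σ)` for `0 < d < 1`. -/
theorem statement3 {n : ℕ} (hn : 1 ≤ n) (G : Set (Fin n → ℝ)) (hG : IsOpen G)
    (ρ σ : ℝ) (hρ : 0 < ρ) (hσ : 0 < σ)
    (f : (Fin n → ℂ) → (Fin n → ℂ) → ℂ) (F : Coeffs n)
    (hanal : ∀ k, AnalyticOn ℂ (F k) (Gext G ρ))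
    (hrep : ∀ p ∈ Gext G ρ, ∀ q ∈ torusExt n σ,
      f p q = ∑' k : Fin n → ℤ, F k p * Complex.exp (Complex.I * zdotC k q))
    (hfin : wnorm G F ρ σ ≠ ⊤)
    (d : ℝ) (hd0 : 0 < d) (hd1 : d < 1) (j : Fin n) :
    wnorm G (fun k p => Complex.I * (k j : ℂ) * F k p) ((1 - d) * ρ) ((1 - d) * σ)
      ≤ ENNReal.ofReal (1 / (Real.exp 1 * d * σ)) * wnorm G F ρ σ := by
  have hsub : Gext G ((1 - d) * ρ) ⊆ Gext G ρ := by
    intro z hz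
    rcases Set.mem_iUnion₂.1 hz with ⟨p, hp, hzp⟩
    exact Set.mem_iUnion₂.2 ⟨p, hp, fun i => lt_of_lt_of_le (hzp i)
      (by nlinarith)⟩
  have key : ∀ k : Fin n → ℤ,
      supE (Gext G ((1 - d) * ρ)) (fun p => Complex.I * (k j : ℂ) * F k p) *
        ENNReal.ofReal (Real.exp ((znorm k : ℝ) * ((1 - d) * σ)))
      ≤ ENNReal.ofReal (1 / (Real.exp 1 * d * σ)) *
        (supE (Gext G ρ) (F k) * ENNReal.ofReal (Real.exp ((znorm k : ℝ) * σ))) := by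
    intro k
    have hkj : ((k j).natAbs : ℝ) ≤ (znorm k : ℝ) := by
      have : (k j).natAbs ≤ znorm k := Finset.single_le_sum
        (f := fun i => (k i).natAbs) (fun i _ => Nat.zero_le _) (Finset.mem_univ j)
      exact_mod_cast this
    have hnorm : ∀ p : Fin n → ℂ, (‖Complex.I * (k j : ℂ) * F k p‖₊ : ℝ≥0∞)
        = ENNReal.ofReal ((k j).natAbs : ℝ) * ‖F k p‖₊ := by
      intro p
      rw [← enorm_eq_nnnorm, ← enorm_eq_nnnorm, ← ofReal_norm, ← ofReal_norm,
        ← ENNReal.ofReal_mul (by positivity)]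
      congr 1
      rw [norm_mul, norm_mul, Complex.norm_I, one_mul, Complex.norm_intCast,
        Nat.cast_natAbs]
      push_cast
      ring
    have hsup : supE (Gext G ((1 - d) * ρ)) (fun p => Complex.I * (k j : ℂ) * F k p)
        ≤ ENNReal.ofReal ((k j).natAbs : ℝ) * supE (Gext G ρ) (F k) := by
      refine iSup₂_le fun p hp => ?_
      rw [hnorm p]
      exact mul_le_mul_right (le_iSup₂ (f := fun p (_ : p ∈ Gext G ρ) => (‖F k p‖₊ : ℝ≥0∞))
        p (hsub hp)) _
    have hscalar : ENNReal.ofReal ((k j).natAbs : ℝ) *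
        ENNReal.ofReal (Real.exp ((znorm k : ℝ) * ((1 - d) * σ)))
        ≤ ENNReal.ofReal (1 / (Real.exp 1 * d * σ)) *
          ENNReal.ofReal (Real.exp ((znorm k : ℝ) * σ)) := by
      rw [← ENNReal.ofReal_mul (by positivity), ← ENNReal.ofReal_mul (by positivity)]
      apply ENNReal.ofReal_le_ofReal
      have hm : (0 : ℝ) ≤ (znorm k : ℝ) := Nat.cast_nonneg _
      have hx : (0 : ℝ) ≤ (znorm k : ℝ) * d * σ := by positivity
      have h1 : Real.exp 1 * ((znorm k : ℝ) * d * σ) ≤ Real.exp ((znorm k : ℝ) * d * σ) :=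
        exp_mul_le hx
      have hpos : (0 : ℝ) < Real.exp 1 * d * σ := by positivity
      have h2 : ((k j).natAbs : ℝ) ≤ 1 / (Real.exp 1 * d * σ) *
          Real.exp ((znorm k : ℝ) * d * σ) := by
        have : ((k j).natAbs : ℝ) * (Real.exp 1 * d * σ) ≤
            Real.exp ((znorm k : ℝ) * d * σ) := by
          calc ((k j).natAbs : ℝ) * (Real.exp 1 * d * σ)
              ≤ (znorm k : ℝ) * (Real.exp 1 * d * σ) := by
                apply mul_le_mul_of_nonneg_right hkj (le_of_lt hpos)
            _ = Real.exp 1 * ((znorm k : ℝ) * d * σ) := by ring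
            _ ≤ _ := h1
        calc ((k j).natAbs : ℝ) = ((k j).natAbs : ℝ) * (Real.exp 1 * d * σ) *
              (1 / (Real.exp 1 * d * σ)) := by field_simp
          _ ≤ Real.exp ((znorm k : ℝ) * d * σ) * (1 / (Real.exp 1 * d * σ)) := by
              apply mul_le_mul_of_nonneg_right this (by positivity)
          _ = 1 / (Real.exp 1 * d * σ) * Real.exp ((znorm k : ℝ) * d * σ) := by ring
      calc ((k j).natAbs : ℝ) * Real.exp ((znorm k : ℝ) * ((1 - d) * σ))
          ≤ (1 / (Real.exp 1 * d * σ) * Real.exp ((znorm k : ℝ) * d * σ)) *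
            Real.exp ((znorm k : ℝ) * ((1 - d) * σ)) :=
            mul_le_mul_of_nonneg_right h2 (le_of_lt (Real.exp_pos _))
        _ = 1 / (Real.exp 1 * d * σ) * Real.exp ((znorm k : ℝ) * σ) := by
            rw [mul_assoc, ← Real.exp_add]; ring_nf
    calc supE (Gext G ((1 - d) * ρ)) (fun p => Complex.I * (k j : ℂ) * F k p) *
          ENNReal.ofReal (Real.exp ((znorm k : ℝ) * ((1 - d) * σ)))
        ≤ (ENNReal.ofReal ((k j).natAbs : ℝ) * supE (Gext G ρ) (F k)) *
          ENNReal.ofReal (Real.exp ((znorm k : ℝ) * ((1 - d) * σ))) :=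
          mul_le_mul_left hsup _
      _ = supE (Gext G ρ) (F k) * (ENNReal.ofReal ((k j).natAbs : ℝ) *
          ENNReal.ofReal (Real.exp ((znorm k : ℝ) * ((1 - d) * σ)))) := by ring
      _ ≤ supE (Gext G ρ) (F k) * (ENNReal.ofReal (1 / (Real.exp 1 * d * σ)) *
          ENNReal.ofReal (Real.exp ((znorm k : ℝ) * σ))) := mul_le_mul_right hscalar _
      _ = ENNReal.ofReal (1 / (Real.exp 1 * d * σ)) *
          (supE (Gext G ρ) (F k) * ENNReal.ofReal (Real.exp ((znorm k : ℝ) * σ))) := by ring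
  unfold wnorm
  rw [← ENNReal.tsum_mul_left]
  exact ENNReal.tsum_le_tsum key


end KAMStmt
end

section
/- Let f be analytic in D₁ = D_{ρ,σ} and g be analytic in D_{1−d'} for some 0 ≤ d' < 1, with finite weighted Fourier norms ‖f‖₁ and ‖g‖_{1−d'}. Then for every 0 < d < 1 − d' the Poisson bracket satisfies ‖{f,g}‖_{1−d'−d} ≤ (2 / (e d (d + d') ρ σ)) ‖f‖₁ ‖g‖_{1−d'}. -/
open scoped BigOperators ENNReal
open Real

namespace KAMStmt

variable {n : ℕ}

/-! ### Auxiliary lemmas for statement4 -/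

section Aux

lemma Gext_mono {G : Set (Fin n → ℝ)} {r r' : ℝ} (h : r ≤ r') : Gext G r ⊆ Gext G r' :=
  Set.iUnion₂_mono fun _ _ _ hz j => lt_of_lt_of_le (hz j) h

lemma isOpen_Gext (G : Set (Fin n → ℝ)) (r : ℝ) : IsOpen (Gext G r) := by
  refine isOpen_biUnion fun p _ => ?_
  have : polydisc r (fun j => (p j : ℂ))
      = ⋂ j, (fun z : Fin n → ℂ => z j) ⁻¹' Metric.ball ((p j : ℂ)) r := by
    ext z; simp [polydisc, Metric.mem_ball, dist_eq_norm]
  rw [this]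
  exact isOpen_iInter_of_finite fun j => Metric.isOpen_ball.preimage (continuous_apply j)

lemma le_supE {S : Set (Fin n → ℂ)} {g : (Fin n → ℂ) → ℂ} {p : Fin n → ℂ} (hp : p ∈ S) :
    (‖g p‖₊ : ℝ≥0∞) ≤ supE S g := le_biSup (fun p => (‖g p‖₊ : ℝ≥0∞)) hp

lemma supE_le {S : Set (Fin n → ℂ)} {g : (Fin n → ℂ) → ℂ} {C : ℝ≥0∞}
    (h : ∀ p ∈ S, (‖g p‖₊ : ℝ≥0∞) ≤ C) : supE S g ≤ C := iSup₂_le h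

lemma znorm_triangle (a b : Fin n → ℤ) : znorm (a + b) ≤ znorm a + znorm b := by
  unfold znorm
  rw [← Finset.sum_add_distrib]
  exact Finset.sum_le_sum fun j _ => Int.natAbs_add_le _ _

lemma ennnorm_tsum_le {ι : Type*} (f : ι → ℂ) :
    (‖∑' i, f i‖₊ : ℝ≥0∞) ≤ ∑' i, (‖f i‖₊ : ℝ≥0∞) := by
  by_cases htop : (∑' i, (‖f i‖₊ : ℝ≥0∞)) = ⊤
  · simp [htop]
  · have hs : Summable fun i => ‖f i‖₊ := ENNReal.tsum_coe_ne_top_iff_summable.mp htop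
    rw [← ENNReal.coe_tsum hs]
    exact_mod_cast nnnorm_tsum_le hs

lemma nat_mul_exp_le (m : ℕ) (τ δ : ℝ) (hδ : 0 < δ) :
    (m:ℝ) * Real.exp ((m:ℝ) * τ) ≤ (1/(Real.exp 1 * δ)) * Real.exp ((m:ℝ) * (τ + δ)) := by
  have hm : (m:ℝ) ≤ Real.exp ((m:ℝ)*δ) / (Real.exp 1 * δ) := by
    rw [le_div_iff₀ (by positivity)]
    have h1 : (m:ℝ)*δ ≤ Real.exp ((m:ℝ)*δ - 1) := by
      have := Real.add_one_le_exp ((m:ℝ)*δ - 1); linarith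
    calc (m:ℝ) * (Real.exp 1 * δ) = ((m:ℝ)*δ) * Real.exp 1 := by ring
      _ ≤ Real.exp ((m:ℝ)*δ - 1) * Real.exp 1 :=
          mul_le_mul_of_nonneg_right h1 (Real.exp_pos 1).le
      _ = Real.exp ((m:ℝ)*δ) := by rw [← Real.exp_add]; ring_nf
  calc (m:ℝ) * Real.exp ((m:ℝ)*τ)
      ≤ (Real.exp ((m:ℝ)*δ) / (Real.exp 1 * δ)) * Real.exp ((m:ℝ)*τ) :=
        mul_le_mul_of_nonneg_right hm (Real.exp_pos _).le
    _ = (1/(Real.exp 1 * δ)) * Real.exp ((m:ℝ) * (τ + δ)) := by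
        rw [mul_add, Real.exp_add]; ring

/-- Cauchy estimate for a partial derivative on a shrunk polydisc extension. -/
lemma cauchy_pder {G : Set (Fin n → ℝ)} {h : (Fin n → ℂ) → ℂ} {r r' : ℝ}
    (hrr : r' < r)
    (hd : DifferentiableOn ℂ h (Gext G r)) (j : Fin n)
    {p : Fin n → ℂ} (hp : p ∈ Gext G r') :
    (‖pder j h p‖₊ : ℝ≥0∞) ≤ ENNReal.ofReal (1/(r - r')) * supE (Gext G r) h := by
  set t := r - r' with htdef
  have ht0 : 0 < t := sub_pos.mpr hrr
  by_cases hfin : supE (Gext G r) h = ⊤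
  · rw [hfin, ENNReal.mul_top (by simp [ENNReal.ofReal_eq_zero, not_le, ht0])]
    exact le_top
  obtain ⟨c, hc, hpc⟩ : ∃ c ∈ G, p ∈ polydisc r' (fun j => (c j : ℂ)) := by
    simpa [Gext, Set.mem_iUnion] using hp
  set v : Fin n → ℂ := Pi.single j 1 with hv
  set ψ : ℂ → (Fin n → ℂ) := fun w => p + w • v with hψ
  have hmaps : ∀ w : ℂ, ‖w‖ ≤ t → ψ w ∈ Gext G r := by
    intro w hw
    refine Set.mem_biUnion hc ?_
    intro i
    by_cases hij : i = j
    · subst hij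
      have he : ψ w i = p i + w := by simp [hψ, hv, Pi.single_eq_same]
      rw [he]
      calc ‖p i + w - (c i : ℂ)‖ = ‖(p i - (c i : ℂ)) + w‖ := by ring_nf
        _ ≤ ‖p i - (c i : ℂ)‖ + ‖w‖ := norm_add_le _ _
        _ < r' + t := add_lt_add_of_lt_of_le (hpc i) hw
        _ = r := by rw [htdef]; ring
    · have he : ψ w i = p i := by simp [hψ, hv, Pi.single_eq_of_ne hij]
      rw [he]
      exact lt_trans (hpc i) hrr
  set M : ℝ := (supE (Gext G r) h).toReal with hM
  have hb : ∀ z ∈ Gext G r, ‖h z‖ ≤ M := by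
    intro z hz
    have h1 : (‖h z‖₊ : ℝ≥0∞) ≤ supE (Gext G r) h := le_supE hz
    have := ENNReal.toReal_mono hfin h1
    simpa using this
  set φ : ℂ → ℂ := fun w => h (ψ w) with hφ
  have hψdiff : Differentiable ℂ ψ := (differentiable_id.smul_const v).const_add p
  have hmapsTo : Set.MapsTo ψ (Metric.closedBall 0 t) (Gext G r) := by
    intro w hw
    exact hmaps w (by simpa [Metric.mem_closedBall, dist_zero_right] using hw)
  have hφd : DifferentiableOn ℂ φ (Metric.closedBall 0 t) :=
    hd.comp hψdiff.differentiableOn hmapsTo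
  have hcl : DiffContOnCl ℂ φ (Metric.ball 0 t) :=
    DifferentiableOn.diffContOnCl (by rwa [closure_ball (0:ℂ) ht0.ne'])
  have hC : ∀ z ∈ Metric.sphere (0:ℂ) t, ‖φ z‖ ≤ M := by
    intro z hz
    exact hb _ (hmaps z (le_of_eq (mem_sphere_zero_iff_norm.mp hz)))
  have hψ0 : ψ 0 = p := by simp [hψ]
  have hhd : DifferentiableAt ℂ h p :=
    hd.differentiableAt ((isOpen_Gext G r).mem_nhds (Gext_mono hrr.le hp))
  have hψder : HasDerivAt ψ v 0 := by
    have := ((hasDerivAt_id (0:ℂ)).smul_const v).const_add p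
    simpa [hψ] using this
  have hder : HasDerivAt φ (fderiv ℂ h p v) 0 := by
    have h2 : HasFDerivAt h (fderiv ℂ h p) (ψ 0) := by rw [hψ0]; exact hhd.hasFDerivAt
    exact h2.comp_hasDerivAt 0 hψder
  have hkey : pder j h p = deriv φ 0 := by
    rw [hder.deriv]; rfl
  have hfinal : ‖pder j h p‖ ≤ M / t := by
    rw [hkey]
    exact Complex.norm_deriv_le_of_forall_mem_sphere_norm_le ht0 hcl hC
  calc (‖pder j h p‖₊ : ℝ≥0∞) = ENNReal.ofReal ‖pder j h p‖ :=
        (ofReal_norm _).symm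
    _ ≤ ENNReal.ofReal (M / t) := ENNReal.ofReal_le_ofReal hfinal
    _ = ENNReal.ofReal ((1/t) * M) := by rw [one_div, inv_mul_eq_div]
    _ = ENNReal.ofReal (1/t) * ENNReal.ofReal M :=
        ENNReal.ofReal_mul (by positivity)
    _ = ENNReal.ofReal (1/(r - r')) * supE (Gext G r) h := by
        rw [hM, ENNReal.ofReal_toReal hfin]

/-- exponential weight `e^{|k| t}` as an `ℝ≥0∞`. -/
noncomputable def Ew (k : Fin n → ℤ) (t : ℝ) : ℝ≥0∞ :=
  ENNReal.ofReal (Real.exp ((znorm k : ℝ) * t))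

/-- `|k|` as an `ℝ≥0∞`. -/
noncomputable def Nw (k : Fin n → ℤ) : ℝ≥0∞ := (znorm k : ℝ≥0∞)

lemma Ew_mono (k : Fin n → ℤ) {t t' : ℝ} (h : t ≤ t') : Ew k t ≤ Ew k t' :=
  ENNReal.ofReal_le_ofReal (Real.exp_le_exp.mpr (mul_le_mul_of_nonneg_left h (Nat.cast_nonneg _)))

lemma Ew_tri (k k₁ : Fin n → ℤ) {t : ℝ} (ht : 0 ≤ t) :
    Ew k t ≤ Ew k₁ t * Ew (k - k₁) t := by
  unfold Ew
  rw [← ENNReal.ofReal_mul (Real.exp_pos _).le, ← Real.exp_add, ← add_mul]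
  apply ENNReal.ofReal_le_ofReal
  apply Real.exp_le_exp.mpr
  apply mul_le_mul_of_nonneg_right _ ht
  have h := znorm_triangle k₁ (k - k₁)
  rw [show k₁ + (k - k₁) = k from by abel] at h
  exact_mod_cast h

lemma Nw_Ew (k : Fin n → ℤ) {τ δ : ℝ} (hδ : 0 < δ) :
    Nw k * Ew k τ ≤ ENNReal.ofReal (1/(Real.exp 1 * δ)) * Ew k (τ + δ) := by
  unfold Nw Ew
  rw [← ENNReal.ofReal_natCast (znorm k), ← ENNReal.ofReal_mul (Nat.cast_nonneg _),
    ← ENNReal.ofReal_mul (by positivity)]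
  exact ENNReal.ofReal_le_ofReal (nat_mul_exp_le _ _ _ hδ)

lemma nnnorm_intCast_ennreal (m : ℤ) : (‖((m:ℤ):ℂ)‖₊ : ℝ≥0∞) = (m.natAbs : ℝ≥0∞) := by
  simp [← NNReal.natCast_natAbs]

/-- Pointwise bound for the Fourier coefficients of the Poisson bracket. -/
lemma pbC_pointwise {G : Set (Fin n → ℝ)} {F Gc : Coeffs n} {ρ d d' : ℝ}
    (hρ : 0 < ρ) (hd'0 : 0 ≤ d') (hd0 : 0 < d) (hd : d < 1 - d')
    (hFd : ∀ k, DifferentiableOn ℂ (F k) (Gext G ρ))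
    (hGd : ∀ k, DifferentiableOn ℂ (Gc k) (Gext G ((1 - d') * ρ)))
    (k : Fin n → ℤ) {p : Fin n → ℂ} (hp : p ∈ Gext G ((1 - d' - d) * ρ)) :
    (‖pbC F Gc k p‖₊ : ℝ≥0∞) ≤
      ∑' k₁, (ENNReal.ofReal (1/((d+d')*ρ)) * Nw (k - k₁) + ENNReal.ofReal (1/(d*ρ)) * Nw k₁)
        * (supE (Gext G ρ) (F k₁) * supE (Gext G ((1 - d') * ρ)) (Gc (k - k₁))) := by
  have hαρρ : (1 - d' - d) * ρ < ρ := by nlinarith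
  have hαρβρ : (1 - d' - d) * ρ < (1 - d') * ρ := by nlinarith
  refine le_trans (ennnorm_tsum_le _) (ENNReal.tsum_le_tsum fun k₁ => ?_)
  set A := supE (Gext G ρ) (F k₁) with hAd
  set B := supE (Gext G ((1 - d') * ρ)) (Gc (k - k₁)) with hBd
  set Cf := ENNReal.ofReal (1/((d+d')*ρ)) with hCfd
  set Cg := ENNReal.ofReal (1/(d*ρ)) with hCgd
  have hF1 : (‖F k₁ p‖₊ : ℝ≥0∞) ≤ A := le_supE (Gext_mono hαρρ.le hp)
  have hG1 : (‖Gc (k - k₁) p‖₊ : ℝ≥0∞) ≤ B := le_supE (Gext_mono hαρβρ.le hp)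
  have hdF : ∀ j, (‖pder j (F k₁) p‖₊ : ℝ≥0∞) ≤ Cf * A := by
    intro j
    have := cauchy_pder hαρρ (hFd k₁) j hp
    rwa [show ρ - (1 - d' - d) * ρ = (d+d')*ρ from by ring] at this
  have hdG : ∀ j, (‖pder j (Gc (k - k₁)) p‖₊ : ℝ≥0∞) ≤ Cg * B := by
    intro j
    have := cauchy_pder hαρβρ (hGd (k - k₁)) j hp
    rwa [show (1 - d')*ρ - (1 - d' - d) * ρ = d*ρ from by ring] at this
  calc (‖∑ j, (pder j (F k₁) p * (Complex.I * ((k j - k₁ j : ℤ) : ℂ)) * Gc (k - k₁) p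
          - Complex.I * ((k₁ j : ℤ) : ℂ) * F k₁ p * pder j (Gc (k - k₁)) p)‖₊ : ℝ≥0∞)
      ≤ ∑ j, (‖pder j (F k₁) p * (Complex.I * ((k j - k₁ j : ℤ) : ℂ)) * Gc (k - k₁) p
          - Complex.I * ((k₁ j : ℤ) : ℂ) * F k₁ p * pder j (Gc (k - k₁)) p‖₊ : ℝ≥0∞) := by
        rw [← ENNReal.coe_finset_sum]; exact_mod_cast nnnorm_sum_le _ _
    _ ≤ ∑ j, ((Cf * A) * (((k - k₁) j).natAbs : ℝ≥0∞) * B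
          + ((k₁ j).natAbs : ℝ≥0∞) * A * (Cg * B)) := by
        refine Finset.sum_le_sum fun j _ => ?_
        calc (‖pder j (F k₁) p * (Complex.I * ((k j - k₁ j : ℤ) : ℂ)) * Gc (k - k₁) p
              - Complex.I * ((k₁ j : ℤ) : ℂ) * F k₁ p * pder j (Gc (k - k₁)) p‖₊ : ℝ≥0∞)
            ≤ (‖pder j (F k₁) p * (Complex.I * ((k j - k₁ j : ℤ) : ℂ)) * Gc (k - k₁) p‖₊ : ℝ≥0∞)
              + (‖Complex.I * ((k₁ j : ℤ) : ℂ) * F k₁ p * pder j (Gc (k - k₁)) p‖₊ : ℝ≥0∞) := by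
              exact_mod_cast nnnorm_sub_le _ _
          _ = (‖pder j (F k₁) p‖₊ : ℝ≥0∞) * (((k - k₁) j).natAbs : ℝ≥0∞) * (‖Gc (k - k₁) p‖₊ : ℝ≥0∞)
              + ((k₁ j).natAbs : ℝ≥0∞) * (‖F k₁ p‖₊ : ℝ≥0∞) * (‖pder j (Gc (k - k₁)) p‖₊ : ℝ≥0∞) := by
              simp only [nnnorm_mul, ENNReal.coe_mul, Complex.nnnorm_I, one_mul,
                nnnorm_intCast_ennreal, Pi.sub_apply]
              try ring
          _ ≤ (Cf * A) * (((k - k₁) j).natAbs : ℝ≥0∞) * B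
              + ((k₁ j).natAbs : ℝ≥0∞) * A * (Cg * B) :=
              add_le_add (mul_le_mul' (mul_le_mul' (hdF j) le_rfl) hG1)
                (mul_le_mul' (mul_le_mul' le_rfl hF1) (hdG j))
    _ = (Cf * Nw (k - k₁) + Cg * Nw k₁) * (A * B) := by
        rw [Finset.sum_add_distrib]
        have hs1 : ∑ j, (((k - k₁) j).natAbs : ℝ≥0∞) = Nw (k - k₁) := by
          rw [Nw, znorm, Nat.cast_sum]
        have hs2 : ∑ j, (((k₁ : Fin n → ℤ) j).natAbs : ℝ≥0∞) = Nw k₁ := by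
          rw [Nw, znorm, Nat.cast_sum]
        rw [show (∑ j, (Cf * A) * (((k - k₁) j).natAbs : ℝ≥0∞) * B)
              = (Cf * A) * (∑ j, (((k - k₁) j).natAbs : ℝ≥0∞)) * B from by
            rw [Finset.mul_sum, Finset.sum_mul]]
        rw [show (∑ j, (((k₁ : Fin n → ℤ) j).natAbs : ℝ≥0∞) * A * (Cg * B))
              = (∑ j, (((k₁ : Fin n → ℤ) j).natAbs : ℝ≥0∞)) * A * (Cg * B) from by
            rw [Finset.sum_mul, Finset.sum_mul]]
        rw [hs1, hs2]
        ring

/-- the double-sum convolution estimate, abstractly. -/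
lemma tsum_conv_bound (a b : (Fin n → ℤ) → ℝ≥0∞) (Cf Cg c1 c2 : ℝ≥0∞)
    {σα σf σg : ℝ} (hασ : 0 ≤ σα)
    (hNf : ∀ k : Fin n → ℤ, Nw k * Ew k σα ≤ c2 * Ew k σf)
    (hNg : ∀ k : Fin n → ℤ, Nw k * Ew k σα ≤ c1 * Ew k σg)
    (hEf : ∀ k : Fin n → ℤ, Ew k σα ≤ Ew k σf)
    (hEg : ∀ k : Fin n → ℤ, Ew k σα ≤ Ew k σg) :
    ∑' k : Fin n → ℤ, (∑' k₁ : Fin n → ℤ,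
        (Cf * Nw (k - k₁) + Cg * Nw k₁) * (a k₁ * b (k - k₁))) * Ew k σα
      ≤ (Cf * c1 + Cg * c2)
        * ((∑' k : Fin n → ℤ, a k * Ew k σf) * (∑' k : Fin n → ℤ, b k * Ew k σg)) := by
  calc ∑' k : Fin n → ℤ, (∑' k₁ : Fin n → ℤ,
        (Cf * Nw (k - k₁) + Cg * Nw k₁) * (a k₁ * b (k - k₁))) * Ew k σα
      = ∑' k : Fin n → ℤ, ∑' k₁ : Fin n → ℤ,
        (Cf * Nw (k - k₁) + Cg * Nw k₁) * (a k₁ * b (k - k₁)) * Ew k σα :=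
        tsum_congr fun k => ENNReal.tsum_mul_right.symm
    _ ≤ ∑' k : Fin n → ℤ, ∑' k₁ : Fin n → ℤ,
        (Cf * Nw (k - k₁) + Cg * Nw k₁) * (a k₁ * b (k - k₁)) * (Ew k₁ σα * Ew (k - k₁) σα) :=
        ENNReal.tsum_le_tsum fun k => ENNReal.tsum_le_tsum fun k₁ =>
          mul_le_mul' le_rfl (Ew_tri k k₁ hασ)
    _ = ∑' k₁ : Fin n → ℤ, ∑' k : Fin n → ℤ,
        (Cf * Nw (k - k₁) + Cg * Nw k₁) * (a k₁ * b (k - k₁)) * (Ew k₁ σα * Ew (k - k₁) σα) :=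
        ENNReal.tsum_comm
    _ = ∑' k₁ : Fin n → ℤ, ∑' k₂ : Fin n → ℤ,
        (Cf * Nw k₂ + Cg * Nw k₁) * (a k₁ * b k₂) * (Ew k₁ σα * Ew k₂ σα) :=
        tsum_congr fun k₁ => (Equiv.subRight k₁).tsum_eq
          (fun k₂ => (Cf * Nw k₂ + Cg * Nw k₁) * (a k₁ * b k₂) * (Ew k₁ σα * Ew k₂ σα))
    _ = ∑' k₁ : Fin n → ℤ, ∑' k₂ : Fin n → ℤ,
        ((Cf * (a k₁ * Ew k₁ σα)) * (Nw k₂ * (b k₂ * Ew k₂ σα))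
          + (Cg * (Nw k₁ * (a k₁ * Ew k₁ σα))) * (b k₂ * Ew k₂ σα)) := by
        refine tsum_congr fun k₁ => tsum_congr fun k₂ => ?_
        unfold Nw; ring
    _ = (Cf * ∑' k₁ : Fin n → ℤ, a k₁ * Ew k₁ σα)
          * (∑' k₂ : Fin n → ℤ, Nw k₂ * (b k₂ * Ew k₂ σα))
        + (Cg * ∑' k₁ : Fin n → ℤ, Nw k₁ * (a k₁ * Ew k₁ σα))
          * (∑' k₂ : Fin n → ℤ, b k₂ * Ew k₂ σα) := by
        rw [show (fun k₁ : Fin n → ℤ => ∑' k₂ : Fin n → ℤ,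
            ((Cf * (a k₁ * Ew k₁ σα)) * (Nw k₂ * (b k₂ * Ew k₂ σα))
              + (Cg * (Nw k₁ * (a k₁ * Ew k₁ σα))) * (b k₂ * Ew k₂ σα)))
            = (fun k₁ : Fin n → ℤ =>
              (Cf * (a k₁ * Ew k₁ σα)) * (∑' k₂ : Fin n → ℤ, Nw k₂ * (b k₂ * Ew k₂ σα))
              + (Cg * (Nw k₁ * (a k₁ * Ew k₁ σα))) * (∑' k₂ : Fin n → ℤ, b k₂ * Ew k₂ σα)) from
          funext fun k₁ => by rw [ENNReal.tsum_add, ENNReal.tsum_mul_left, ENNReal.tsum_mul_left]]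
        rw [ENNReal.tsum_add, ENNReal.tsum_mul_right, ENNReal.tsum_mul_right,
          ENNReal.tsum_mul_left, ENNReal.tsum_mul_left]
        try ring
    _ ≤ (Cf * ∑' k₁ : Fin n → ℤ, a k₁ * Ew k₁ σf)
          * (c1 * ∑' k₂ : Fin n → ℤ, b k₂ * Ew k₂ σg)
        + (Cg * (c2 * ∑' k₁ : Fin n → ℤ, a k₁ * Ew k₁ σf))
          * (∑' k₂ : Fin n → ℤ, b k₂ * Ew k₂ σg) := by
        refine add_le_add (mul_le_mul' (mul_le_mul' le_rfl ?_) ?_)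
          (mul_le_mul' (mul_le_mul' le_rfl ?_) ?_)
        · exact ENNReal.tsum_le_tsum fun k => mul_le_mul' le_rfl (hEf k)
        · calc (∑' k₂ : Fin n → ℤ, Nw k₂ * (b k₂ * Ew k₂ σα))
              ≤ ∑' k₂ : Fin n → ℤ, c1 * (b k₂ * Ew k₂ σg) := by
                refine ENNReal.tsum_le_tsum fun k₂ => ?_
                calc Nw k₂ * (b k₂ * Ew k₂ σα) = b k₂ * (Nw k₂ * Ew k₂ σα) := by ring
                  _ ≤ b k₂ * (c1 * Ew k₂ σg) := mul_le_mul' le_rfl (hNg k₂)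
                  _ = c1 * (b k₂ * Ew k₂ σg) := by ring
            _ = c1 * ∑' k₂ : Fin n → ℤ, b k₂ * Ew k₂ σg := ENNReal.tsum_mul_left
        · calc (∑' k₁ : Fin n → ℤ, Nw k₁ * (a k₁ * Ew k₁ σα))
              ≤ ∑' k₁ : Fin n → ℤ, c2 * (a k₁ * Ew k₁ σf) := by
                refine ENNReal.tsum_le_tsum fun k₁ => ?_
                calc Nw k₁ * (a k₁ * Ew k₁ σα) = a k₁ * (Nw k₁ * Ew k₁ σα) := by ring
                  _ ≤ a k₁ * (c2 * Ew k₁ σf) := mul_le_mul' le_rfl (hNf k₁)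
                  _ = c2 * (a k₁ * Ew k₁ σf) := by ring
            _ = c2 * ∑' k₁ : Fin n → ℤ, a k₁ * Ew k₁ σf := ENNReal.tsum_mul_left
        · exact ENNReal.tsum_le_tsum fun k => mul_le_mul' le_rfl (hEg k)
    _ = (Cf * c1 + Cg * c2)
        * ((∑' k : Fin n → ℤ, a k * Ew k σf) * (∑' k : Fin n → ℤ, b k * Ew k σg)) := by
        ring

end Aux

/-- Lemma 4.1.ii: estimate for the Poisson bracket:
if `f` is analytic in `D₁` and `g` in `D_{1−d'}` with finite weighted Fourier norms, then
`‖{f,g}‖_{1−d'−d} ≤ (2/(e d (d+d') ρ σ)) ‖f‖₁ ‖g‖_{1−d'}` for `0 < d < 1 − d'`.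
The functions are given through their Fourier coefficient families `F`, `Gc`, and the
bracket through the corresponding coefficient family `pbC F Gc`. -/
theorem statement4 {n : ℕ} (hn : 1 ≤ n) (G : Set (Fin n → ℝ)) (hG : IsOpen G)
    (ρ σ : ℝ) (hρ : 0 < ρ) (hσ : 0 < σ)
    (d' d : ℝ) (hd'0 : 0 ≤ d') (hd'1 : d' < 1) (hd0 : 0 < d) (hd : d < 1 - d')
    (f g : (Fin n → ℂ) → (Fin n → ℂ) → ℂ) (F Gc : Coeffs n)
    (hFanal : ∀ k, AnalyticOn ℂ (F k) (Gext G ρ))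
    (hGanal : ∀ k, AnalyticOn ℂ (Gc k) (Gext G ((1 - d') * ρ)))
    (hFrep : ∀ p ∈ Gext G ρ, ∀ q ∈ torusExt n σ,
      f p q = ∑' k : Fin n → ℤ, F k p * Complex.exp (Complex.I * zdotC k q))
    (hGrep : ∀ p ∈ Gext G ((1 - d') * ρ), ∀ q ∈ torusExt n ((1 - d') * σ),
      g p q = ∑' k : Fin n → ℤ, Gc k p * Complex.exp (Complex.I * zdotC k q))
    (hFfin : wnorm G F ρ σ ≠ ⊤)
    (hGfin : wnorm G Gc ((1 - d') * ρ) ((1 - d') * σ) ≠ ⊤) :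
    wnorm G (pbC F Gc) ((1 - d' - d) * ρ) ((1 - d' - d) * σ)
      ≤ ENNReal.ofReal (2 / (Real.exp 1 * d * (d + d') * ρ * σ))
        * (wnorm G F ρ σ * wnorm G Gc ((1 - d') * ρ) ((1 - d') * σ)) := by
  have hFd : ∀ k, DifferentiableOn ℂ (F k) (Gext G ρ) := fun k => (hFanal k).differentiableOn
  have hGd : ∀ k, DifferentiableOn ℂ (Gc k) (Gext G ((1 - d') * ρ)) :=
    fun k => (hGanal k).differentiableOn
  have hdd' : (0:ℝ) < d + d' := by linarith
  have hασ : (0:ℝ) ≤ (1 - d' - d) * σ := by nlinarith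
  have hNf : ∀ k : Fin n → ℤ, Nw k * Ew k ((1 - d' - d) * σ)
      ≤ ENNReal.ofReal (1/(Real.exp 1 * ((d+d')*σ))) * Ew k σ := by
    intro k
    have := Nw_Ew k (τ := (1 - d' - d) * σ) (δ := (d+d')*σ) (by positivity)
    rwa [show (1 - d' - d) * σ + (d+d')*σ = σ from by ring] at this
  have hNg : ∀ k : Fin n → ℤ, Nw k * Ew k ((1 - d' - d) * σ)
      ≤ ENNReal.ofReal (1/(Real.exp 1 * (d*σ))) * Ew k ((1 - d') * σ) := by
    intro k
    have := Nw_Ew k (τ := (1 - d' - d) * σ) (δ := d*σ) (by positivity)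
    rwa [show (1 - d' - d) * σ + d*σ = (1 - d') * σ from by ring] at this
  have hconst : ENNReal.ofReal (1/((d+d')*ρ)) * ENNReal.ofReal (1/(Real.exp 1 * (d*σ)))
      + ENNReal.ofReal (1/(d*ρ)) * ENNReal.ofReal (1/(Real.exp 1 * ((d+d')*σ)))
      = ENNReal.ofReal (2 / (Real.exp 1 * d * (d + d') * ρ * σ)) := by
    rw [← ENNReal.ofReal_mul (by positivity), ← ENNReal.ofReal_mul (by positivity),
      ← ENNReal.ofReal_add (by positivity) (by positivity)]
    congr 1
    have he : Real.exp 1 ≠ 0 := (Real.exp_pos 1).ne'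
    field_simp
    ring
  calc wnorm G (pbC F Gc) ((1 - d' - d) * ρ) ((1 - d' - d) * σ)
      = ∑' k : Fin n → ℤ, supE (Gext G ((1 - d' - d) * ρ)) (pbC F Gc k)
          * Ew k ((1 - d' - d) * σ) := rfl
    _ ≤ ∑' k : Fin n → ℤ, (∑' k₁ : Fin n → ℤ,
          (ENNReal.ofReal (1/((d+d')*ρ)) * Nw (k - k₁) + ENNReal.ofReal (1/(d*ρ)) * Nw k₁)
          * (supE (Gext G ρ) (F k₁) * supE (Gext G ((1 - d') * ρ)) (Gc (k - k₁))))
          * Ew k ((1 - d' - d) * σ) := by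
        refine ENNReal.tsum_le_tsum fun k => mul_le_mul' (supE_le fun p hp => ?_) le_rfl
        exact pbC_pointwise hρ hd'0 hd0 hd hFd hGd k hp
    _ ≤ (ENNReal.ofReal (1/((d+d')*ρ)) * ENNReal.ofReal (1/(Real.exp 1 * (d*σ)))
          + ENNReal.ofReal (1/(d*ρ)) * ENNReal.ofReal (1/(Real.exp 1 * ((d+d')*σ))))
        * ((∑' k : Fin n → ℤ, supE (Gext G ρ) (F k) * Ew k σ)
          * (∑' k : Fin n → ℤ, supE (Gext G ((1 - d') * ρ)) (Gc k) * Ew k ((1 - d') * σ))) :=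
        tsum_conv_bound (fun k => supE (Gext G ρ) (F k))
          (fun k => supE (Gext G ((1 - d') * ρ)) (Gc k)) _ _ _ _ hασ hNf hNg
          (fun k => Ew_mono k (by nlinarith))
          (fun k => Ew_mono k (by nlinarith))
    _ = ENNReal.ofReal (2 / (Real.exp 1 * d * (d + d') * ρ * σ))
        * (wnorm G F ρ σ * wnorm G Gc ((1 - d') * ρ) ((1 - d') * σ)) := by
        rw [hconst]; rfl


end KAMStmt
end

section
/- Let ω ∈ ℝⁿ be Diophantine with constants γ > 0, τ ≥ n − 1, let σ > 0, 0 < δ < 1, and let c : ℤⁿ∖{0} → ℂ satisfy M = Σ_{k≠0} |c_k| e^{|k|σ} < ∞, defining h₀(q) = Σ_{k≠0} c_k e^{i k·q}. Then the series χ₀(q) = Σ_{k≠0} (c_k/(i k·ω)) e^{i k·q} converges absolutely on Tⁿ_{(1−δ)σ}, its weighted Fourier norm satisfies Σ_{k≠0} (|c_k|/|k·ω|) e^{|k|(1−δ)σ} ≤ (1/γ) (τ/(e δ σ))^τ M, and χ₀ solves the homological equation Σ_{j=1}^n ω_j ∂χ₀/∂q_j = h₀ on Tⁿ_{(1−δ)σ}.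 -/
open scoped BigOperators ENNReal
open Real

namespace KAMStmt

variable {n : ℕ}

-- AUX START
lemma znorm_cast (k : Fin n → ℤ) : (znorm k : ℝ) = ∑ j, |(k j : ℝ)| := by
  simp [znorm, Nat.cast_natAbs]

lemma znorm_eq_zero {k : Fin n → ℤ} (h : znorm k = 0) : k = 0 := by
  funext j
  have := Finset.sum_eq_zero_iff.mp h j (Finset.mem_univ j)
  simpa [Int.natAbs_eq_zero] using this

lemma one_le_znorm {k : Fin n → ℤ} (hk : k ≠ 0) : (1 : ℝ) ≤ (znorm k : ℝ) := by
  have : znorm k ≠ 0 := fun h => hk (znorm_eq_zero h)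
  exact_mod_cast Nat.one_le_iff_ne_zero.2 this

lemma rpow_mul_exp_le {a b x : ℝ} (ha : 0 ≤ a) (hb : 0 < b) (hx : 0 ≤ x) :
    x ^ a * Real.exp (-(b * x)) ≤ (a / (Real.exp 1 * b)) ^ a := by
  rcases eq_or_lt_of_le ha with rfl | ha'
  · simpa [Real.rpow_zero] using Real.exp_le_one_iff.mpr (neg_nonpos.mpr (by positivity))
  rcases eq_or_lt_of_le hx with rfl | hx'
  · rw [Real.zero_rpow (ne_of_gt ha'), zero_mul]
    positivity
  · have heb : 0 < Real.exp 1 * b := by positivity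
    have hq : 0 < a / (Real.exp 1 * b) := by positivity
    rw [Real.rpow_def_of_pos hx', Real.rpow_def_of_pos hq, ← Real.exp_add, Real.exp_le_exp]
    have hlog : Real.log (a / (Real.exp 1 * b)) = Real.log a - 1 - Real.log b := by
      rw [Real.log_div (ne_of_gt ha') (ne_of_gt heb),
        Real.log_mul (Real.exp_pos 1).ne' hb.ne', Real.log_exp]
      ring
    rw [hlog]
    have key := Real.log_le_sub_one_of_pos (show 0 < b * x / a by positivity)
    rw [Real.log_div (by positivity) ha'.ne', Real.log_mul hb.ne' hx'.ne'] at key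
    have key2 := mul_le_mul_of_nonneg_left key ha'.le
    have hcan : a * (b * x / a) = b * x := by field_simp
    nlinarith [key2, hcan]

lemma exp_norm_bound {s : ℝ} (hs : 0 ≤ s) (k : Fin n → ℤ) {q : Fin n → ℂ}
    (hq : q ∈ torusExt n s) :
    ‖Complex.exp (Complex.I * zdotC k q)‖ ≤ Real.exp ((znorm k : ℝ) * s) := by
  rw [Complex.norm_exp, Real.exp_le_exp]
  have h1 : (Complex.I * zdotC k q).re = -(zdotC k q).im := by
    simp [Complex.mul_re]
  have h2 : (zdotC k q).im = ∑ j, (k j : ℝ) * (q j).im := by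
    rw [zdotC, Complex.im_sum]
    exact Finset.sum_congr rfl fun j _ => by simp [Complex.mul_im]
  rw [h1, h2, ← Finset.sum_neg_distrib, znorm_cast, Finset.sum_mul]
  refine Finset.sum_le_sum fun j _ => ?_
  have := (hq j).le
  calc -((k j : ℝ) * (q j).im) ≤ |(k j : ℝ) * (q j).im| := neg_le_abs _
    _ = |(k j : ℝ)| * |(q j).im| := abs_mul _ _
    _ ≤ |(k j : ℝ)| * s := mul_le_mul_of_nonneg_left this (abs_nonneg _)

noncomputable def ellk (k : Fin n → ℤ) : (Fin n → ℂ) →L[ℂ] ℂ :=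
  ∑ j, (k j : ℂ) • (ContinuousLinearMap.proj j : (Fin n → ℂ) →L[ℂ] ℂ)

lemma ellk_apply (k : Fin n → ℤ) (q : Fin n → ℂ) : ellk k q = zdotC k q := by
  simp [ellk, zdotC, ContinuousLinearMap.sum_apply, smul_eq_mul]

lemma ellk_single (k : Fin n → ℤ) (j : Fin n) : ellk k (Pi.single j 1) = (k j : ℂ) := by
  rw [ellk_apply, zdotC]
  rw [Finset.sum_eq_single j]
  · simp
  · intro i _ hij; simp [Pi.single_apply, hij]
  · intro h; exact absurd (Finset.mem_univ j) h

lemma ellk_norm (k : Fin n → ℤ) : ‖ellk k‖ ≤ (znorm k : ℝ) := by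
  refine ContinuousLinearMap.opNorm_le_bound _ (by positivity) fun x => ?_
  rw [ellk_apply, zdotC]
  calc ‖∑ j, (k j : ℂ) * x j‖ ≤ ∑ j, ‖(k j : ℂ) * x j‖ := norm_sum_le _ _
    _ ≤ ∑ j, |(k j : ℝ)| * ‖x‖ := by
        refine Finset.sum_le_sum fun j _ => ?_
        rw [norm_mul]
        have h1 : ‖(k j : ℂ)‖ = |(k j : ℝ)| := by
          rw [show ((k j : ℂ)) = (((k j : ℝ) : ℂ)) by push_cast; ring, Complex.norm_real,
            Real.norm_eq_abs]
        rw [h1]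
        exact mul_le_mul_of_nonneg_left (norm_le_pi_norm x j) (abs_nonneg _)
    _ = (znorm k : ℝ) * ‖x‖ := by rw [znorm_cast, Finset.sum_mul]

noncomputable def fk (ω : Fin n → ℝ) (c : (Fin n → ℤ) → ℂ) (k : Fin n → ℤ)
    (q : Fin n → ℂ) : ℂ :=
  c k / (Complex.I * (zdotR k ω : ℂ)) * Complex.exp (Complex.I * zdotC k q)

noncomputable def Fk' (ω : Fin n → ℝ) (c : (Fin n → ℤ) → ℂ) (k : Fin n → ℤ)
    (q : Fin n → ℂ) : (Fin n → ℂ) →L[ℂ] ℂ :=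
  (fk ω c k q * Complex.I) • ellk k

lemma hasFDerivAt_fk (ω : Fin n → ℝ) (c : (Fin n → ℤ) → ℂ) (k : Fin n → ℤ)
    (q : Fin n → ℂ) : HasFDerivAt (fk ω c k) (Fk' ω c k q) q := by
  have hfun : ⇑(ellk (n := n) k) = fun q' => zdotC k q' := funext (ellk_apply k)
  have h1 : HasFDerivAt (fun q' => zdotC k q') (ellk k) q := hfun ▸ (ellk k).hasFDerivAt
  have hz : HasDerivAt (fun z : ℂ => Complex.I * z) Complex.I (zdotC k q) := by
    simpa using (hasDerivAt_id (zdotC k q)).const_mul Complex.I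
  have hexp := (Complex.hasDerivAt_exp (Complex.I * zdotC k q)).comp (zdotC k q) hz
  have h2 := hexp.const_mul (c k / (Complex.I * (zdotR k ω : ℂ)))
  have h3 := h2.comp_hasFDerivAt q h1
  refine h3.congr_fderiv ?_
  rw [Fk', fk]
  ring_nf

lemma fk_norm_le (ω : Fin n → ℝ) (c : (Fin n → ℤ) → ℂ) {s : ℝ} (hs : 0 ≤ s)
    (k : Fin n → ℤ) {q : Fin n → ℂ} (hq : q ∈ torusExt n s) :
    ‖fk ω c k q‖ ≤ ‖c k‖ / |zdotR k ω| * Real.exp ((znorm k : ℝ) * s) := by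
  rw [fk, norm_mul, norm_div]
  have h1 : ‖Complex.I * (zdotR k ω : ℂ)‖ = |zdotR k ω| := by
    rw [norm_mul, Complex.norm_I, one_mul, Complex.norm_real, Real.norm_eq_abs]
  rw [h1]
  exact mul_le_mul_of_nonneg_left (exp_norm_bound hs k hq) (by positivity)

lemma Fk'_norm_le (ω : Fin n → ℝ) (c : (Fin n → ℤ) → ℂ) {s : ℝ} (hs : 0 ≤ s)
    (k : Fin n → ℤ) {q : Fin n → ℂ} (hq : q ∈ torusExt n s) :
    ‖Fk' ω c k q‖ ≤ ‖c k‖ / |zdotR k ω| * Real.exp ((znorm k : ℝ) * s) * (znorm k : ℝ) := by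
  rw [Fk', norm_smul (fk ω c k q * Complex.I) (ellk k), norm_mul, Complex.norm_I, mul_one]
  exact mul_le_mul (fk_norm_le ω c hs k hq) (ellk_norm k) (norm_nonneg _) (by positivity)

lemma torusExt_open (s : ℝ) : IsOpen (torusExt n s) := by
  have : torusExt n s = ⋂ j, {q : Fin n → ℂ | |(q j).im| < s} := by
    ext q; simp [torusExt, Set.mem_iInter]
  rw [this]
  exact isOpen_iInter_of_finite fun j =>
    isOpen_lt ((Complex.continuous_im.comp (continuous_apply j)).abs) continuous_const

lemma torusExt_convex (s : ℝ) : Convex ℝ (torusExt n s) := by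
  intro x hx y hy a b ha hb hab j
  have him : ((a • x + b • y) j).im = a * (x j).im + b * (y j).im := by
    simp [Complex.add_im, Complex.smul_im]
  rw [him]
  have habs : |a * (x j).im + b * (y j).im| ≤ a * |(x j).im| + b * |(y j).im| := by
    calc |a * (x j).im + b * (y j).im| ≤ |a * (x j).im| + |b * (y j).im| := abs_add_le _ _
      _ = a * |(x j).im| + b * |(y j).im| := by
          rw [abs_mul, abs_mul, abs_of_nonneg ha, abs_of_nonneg hb]
  rcases eq_or_lt_of_le ha with rfl | ha'
  · have hb1 : b = 1 := by linarith
    simpa [hb1] using hy j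
  · have h1 : a * |(x j).im| < a * s := mul_lt_mul_of_pos_left (hx j) ha'
    have h2 : b * |(y j).im| ≤ b * s := mul_le_mul_of_nonneg_left (hy j).le hb
    have hsum : a * s + b * s = s := by rw [← add_mul, hab, one_mul]
    linarith

lemma main_est {ω : Fin n → ℝ} {γ τ : ℝ} (hγ : 0 < γ) (hτ0 : 0 ≤ τ)
    (hdio : Diophantine ω γ τ) {σ δ : ℝ} (hσ : 0 < σ) (hδ0 : 0 < δ)
    (c : (Fin n → ℤ) → ℂ) {k : Fin n → ℤ} (hk : k ≠ 0) (a : ℝ) (ha : 0 ≤ a) :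
    (znorm k : ℝ) ^ a * (‖c k‖ / |zdotR k ω|) * Real.exp ((znorm k : ℝ) * ((1 - δ) * σ))
      ≤ γ⁻¹ * ((a + τ) / (Real.exp 1 * δ * σ)) ^ (a + τ)
          * (‖c k‖ * Real.exp ((znorm k : ℝ) * σ)) := by
  set N : ℝ := (znorm k : ℝ) with hN
  have hN1 : (1 : ℝ) ≤ N := one_le_znorm hk
  have hN0 : (0 : ℝ) < N := lt_of_lt_of_le one_pos hN1
  have hW : γ * N ^ (-τ) < |zdotR k ω| := hdio k hk
  have hWpos : 0 < |zdotR k ω| := lt_trans (by positivity) hW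
  have hinv : |zdotR k ω|⁻¹ ≤ γ⁻¹ * N ^ τ := by
    have h := inv_anti₀ (by positivity) hW.le
    rwa [mul_inv, ← Real.rpow_neg hN0.le, neg_neg] at h
  have hxp : Real.exp (N * ((1 - δ) * σ))
      = Real.exp (N * σ) * Real.exp (-(δ * σ * N)) := by
    rw [← Real.exp_add]; ring_nf
  have hrp : N ^ (a + τ) * Real.exp (-(δ * σ * N))
      ≤ ((a + τ) / (Real.exp 1 * δ * σ)) ^ (a + τ) := by
    have := rpow_mul_exp_le (a := a + τ) (b := δ * σ) (x := N)
      (by linarith) (by positivity) hN0.le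
    rwa [← mul_assoc] at this
  calc N ^ a * (‖c k‖ / |zdotR k ω|) * Real.exp (N * ((1 - δ) * σ))
      = N ^ a * (‖c k‖ * |zdotR k ω|⁻¹) * (Real.exp (N * σ) * Real.exp (-(δ * σ * N))) := by
        rw [div_eq_mul_inv, hxp]
    _ ≤ N ^ a * (‖c k‖ * (γ⁻¹ * N ^ τ)) * (Real.exp (N * σ) * Real.exp (-(δ * σ * N))) := by
        gcongr
    _ = γ⁻¹ * ((N ^ a * N ^ τ) * Real.exp (-(δ * σ * N))) * (‖c k‖ * Real.exp (N * σ)) := by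
        ring
    _ = γ⁻¹ * (N ^ (a + τ) * Real.exp (-(δ * σ * N))) * (‖c k‖ * Real.exp (N * σ)) := by
        rw [← Real.rpow_add hN0]
    _ ≤ γ⁻¹ * ((a + τ) / (Real.exp 1 * δ * σ)) ^ (a + τ) * (‖c k‖ * Real.exp (N * σ)) := by
        gcongr

set_option maxHeartbeats 1000000 in
/-- solution of the homological equation. Given a Diophantine `ω`, a weightedly
summable coefficient family `c` (with `c 0 = 0`, i.e. `c` defined on `ℤⁿ∖{0}`), setting
`h₀(q) = Σ_{k≠0} c_k e^{i k·q}` and `χ₀(q) = Σ_{k≠0} (c_k/(i k·ω)) e^{i k·q}`, the series for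
`χ₀` converges absolutely on `Tⁿ_{(1−δ)σ}`, its weighted Fourier norm satisfies
`Σ_{k≠0} (|c_k|/|k·ω|) e^{|k|(1−δ)σ} ≤ (1/γ)(τ/(eδσ))^τ M`, and `χ₀` solves
`Σ_j ω_j ∂χ₀/∂q_j = h₀` on `Tⁿ_{(1−δ)σ}`. -/
theorem statement7 {n : ℕ} (hn : 1 ≤ n) (ω : Fin n → ℝ) (γ τ : ℝ)
    (hγ : 0 < γ) (hτ : (n : ℝ) - 1 ≤ τ) (hdio : Diophantine ω γ τ)
    (σ δ : ℝ) (hσ : 0 < σ) (hδ0 : 0 < δ) (hδ1 : δ < 1)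
    (c : (Fin n → ℤ) → ℂ) (hc0 : c 0 = 0)
    (hM : Summable (fun k : Fin n → ℤ => ‖c k‖ * Real.exp ((znorm k : ℝ) * σ))) :
    (∀ q ∈ torusExt n ((1 - δ) * σ),
      Summable (fun k : Fin n → ℤ =>
        ‖c k / (Complex.I * (zdotR k ω : ℂ)) * Complex.exp (Complex.I * zdotC k q)‖)) ∧
    Summable (fun k : Fin n → ℤ =>
      ‖c k‖ / |zdotR k ω| * Real.exp ((znorm k : ℝ) * ((1 - δ) * σ))) ∧
    (∑' k : Fin n → ℤ, ‖c k‖ / |zdotR k ω| * Real.exp ((znorm k : ℝ) * ((1 - δ) * σ)))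
      ≤ (1 / γ) * (τ / (Real.exp 1 * δ * σ)) ^ τ
          * ∑' k : Fin n → ℤ, ‖c k‖ * Real.exp ((znorm k : ℝ) * σ) ∧
    ∀ q ∈ torusExt n ((1 - δ) * σ),
      (∑ j, (ω j : ℂ) *
          fderiv ℂ (fun q' => ∑' k : Fin n → ℤ,
            c k / (Complex.I * (zdotR k ω : ℂ)) * Complex.exp (Complex.I * zdotC k q'))
            q (Pi.single j 1))
        = ∑' k : Fin n → ℤ, c k * Complex.exp (Complex.I * zdotC k q) := by
  have h1n : (1 : ℝ) ≤ (n : ℝ) := by exact_mod_cast hn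
  have hτ0 : 0 ≤ τ := by linarith
  have hs0 : 0 < (1 - δ) * σ := mul_pos (by linarith) hσ
  have hCnn : 0 ≤ 1 / γ * (τ / (Real.exp 1 * δ * σ)) ^ τ :=
    mul_nonneg (by positivity) (Real.rpow_nonneg (div_nonneg hτ0 (by positivity)) τ)
  have h2le : ∀ k : Fin n → ℤ,
      ‖c k‖ / |zdotR k ω| * Real.exp ((znorm k : ℝ) * ((1 - δ) * σ))
        ≤ 1 / γ * (τ / (Real.exp 1 * δ * σ)) ^ τ
            * (‖c k‖ * Real.exp ((znorm k : ℝ) * σ)) := by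
    intro k
    by_cases hk : k = 0
    · subst hk; simp [hc0]
    · have h := main_est hγ hτ0 hdio hσ hδ0 c hk 0 le_rfl
      rw [Real.rpow_zero, one_mul, zero_add] at h
      rw [one_div]
      exact h
  have hsum2 : Summable (fun k : Fin n → ℤ =>
      ‖c k‖ / |zdotR k ω| * Real.exp ((znorm k : ℝ) * ((1 - δ) * σ))) :=
    Summable.of_nonneg_of_le (fun k => by positivity) h2le (hM.mul_left _)
  have hpart1 : ∀ q ∈ torusExt n ((1 - δ) * σ),
      Summable (fun k : Fin n → ℤ =>
        ‖c k / (Complex.I * (zdotR k ω : ℂ)) * Complex.exp (Complex.I * zdotC k q)‖) := by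
    intro q hq
    exact Summable.of_nonneg_of_le (fun k => norm_nonneg _)
      (fun k => fk_norm_le ω c hs0.le k hq) hsum2
  refine ⟨hpart1, hsum2, ?_, ?_⟩
  · calc (∑' k : Fin n → ℤ, ‖c k‖ / |zdotR k ω| * Real.exp ((znorm k : ℝ) * ((1 - δ) * σ)))
        ≤ ∑' k : Fin n → ℤ, 1 / γ * (τ / (Real.exp 1 * δ * σ)) ^ τ
            * (‖c k‖ * Real.exp ((znorm k : ℝ) * σ)) :=
          Summable.tsum_le_tsum h2le hsum2 (hM.mul_left _)
      _ = 1 / γ * (τ / (Real.exp 1 * δ * σ)) ^ τ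
            * ∑' k : Fin n → ℤ, ‖c k‖ * Real.exp ((znorm k : ℝ) * σ) := tsum_mul_left
  -- part 4
  have hu : Summable (fun k : Fin n → ℤ =>
      ‖c k‖ / |zdotR k ω| * Real.exp ((znorm k : ℝ) * ((1 - δ) * σ)) * (znorm k : ℝ)) := by
    refine Summable.of_nonneg_of_le (fun k => by positivity) (fun k => ?_)
      (hM.mul_left (γ⁻¹ * ((1 + τ) / (Real.exp 1 * δ * σ)) ^ (1 + τ)))
    by_cases hk : k = 0
    · subst hk
      simp only [hc0, norm_zero, zero_div, zero_mul, mul_zero, zero_mul]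
      positivity
    · have h := main_est hγ hτ0 hdio hσ hδ0 c hk 1 zero_le_one
      rw [Real.rpow_one] at h
      calc ‖c k‖ / |zdotR k ω| * Real.exp ((znorm k : ℝ) * ((1 - δ) * σ)) * (znorm k : ℝ)
          = (znorm k : ℝ) * (‖c k‖ / |zdotR k ω|)
              * Real.exp ((znorm k : ℝ) * ((1 - δ) * σ)) := by ring
        _ ≤ _ := h
  have hbound : ∀ (k : Fin n → ℤ) (x : Fin n → ℂ), x ∈ torusExt n ((1 - δ) * σ) →
      ‖Fk' ω c k x‖ ≤ ‖c k‖ / |zdotR k ω| * Real.exp ((znorm k : ℝ) * ((1 - δ) * σ))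
        * (znorm k : ℝ) :=
    fun k x hx => Fk'_norm_le ω c hs0.le k hx
  have h0mem : (0 : Fin n → ℂ) ∈ torusExt n ((1 - δ) * σ) := fun j => by simpa using hs0
  have hf0 : Summable (fun k : Fin n → ℤ => fk ω c k 0) :=
    Summable.of_norm (Summable.of_nonneg_of_le (fun k => norm_nonneg _)
      (fun k => fk_norm_le ω c hs0.le k h0mem) hsum2)
  intro q hq
  have hfd : HasFDerivAt (fun q' => ∑' k : Fin n → ℤ, fk ω c k q')
      (∑' k : Fin n → ℤ, Fk' ω c k q) q :=
    hasFDerivAt_tsum_of_isPreconnected hu (torusExt_open _)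
      (torusExt_convex _).isPreconnected (fun k x _ => hasFDerivAt_fk ω c k x)
      hbound h0mem hf0 hq
  have key : fderiv ℂ (fun q' => ∑' k : Fin n → ℤ,
      c k / (Complex.I * (zdotR k ω : ℂ)) * Complex.exp (Complex.I * zdotC k q')) q
      = ∑' k : Fin n → ℤ, Fk' ω c k q := hfd.fderiv
  simp only [key]
  have hS' : Summable (fun k : Fin n → ℤ => Fk' ω c k q) :=
    Summable.of_norm (Summable.of_nonneg_of_le (fun k => norm_nonneg _)
      (fun k => hbound k q hq) hu)
  have happ : ∀ j : Fin n, (∑' k : Fin n → ℤ, Fk' ω c k q) (Pi.single j 1)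
      = ∑' k : Fin n → ℤ, (Fk' ω c k q) (Pi.single j 1) := fun j =>
    (ContinuousLinearMap.apply ℂ ℂ (Pi.single j 1)).map_tsum hS'
  have hnorm1 : ∀ (j : Fin n), ‖(Pi.single j 1 : Fin n → ℂ)‖ ≤ 1 := by
    intro j
    refine (pi_norm_le_iff_of_nonneg zero_le_one).mpr fun i => ?_
    rcases eq_or_ne i j with rfl | hij
    · simp
    · simp [Pi.single_apply, hij]
  have hSnorm : Summable (fun k : Fin n → ℤ => ‖Fk' ω c k q‖) :=
    Summable.of_nonneg_of_le (fun k => norm_nonneg _) (fun k => hbound k q hq) hu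
  have hsj : ∀ j : Fin n, Summable (fun k : Fin n → ℤ => (Fk' ω c k q) (Pi.single j 1)) := by
    intro j
    refine Summable.of_norm (Summable.of_nonneg_of_le (fun k => norm_nonneg _)
      (fun k => ?_) hSnorm)
    calc ‖(Fk' ω c k q) (Pi.single j 1)‖ ≤ ‖Fk' ω c k q‖ * ‖(Pi.single j 1 : Fin n → ℂ)‖ :=
          (Fk' ω c k q).le_opNorm _
      _ ≤ ‖Fk' ω c k q‖ * 1 := mul_le_mul_of_nonneg_left (hnorm1 j) (norm_nonneg _)
      _ = ‖Fk' ω c k q‖ := mul_one _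
  calc ∑ j, (ω j : ℂ) * (∑' k : Fin n → ℤ, Fk' ω c k q) (Pi.single j 1)
      = ∑ j, ∑' k : Fin n → ℤ, (ω j : ℂ) * (Fk' ω c k q) (Pi.single j 1) :=
        Finset.sum_congr rfl fun j _ => by rw [happ j, ← tsum_mul_left]
    _ = ∑' k : Fin n → ℤ, ∑ j, (ω j : ℂ) * (Fk' ω c k q) (Pi.single j 1) :=
        (Summable.tsum_finsetSum fun j _ => (hsj j).mul_left _).symm
    _ = ∑' k : Fin n → ℤ, c k * Complex.exp (Complex.I * zdotC k q) := by
        refine tsum_congr fun k => ?_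
        have hev : ∀ j, (Fk' ω c k q) (Pi.single j 1)
            = fk ω c k q * Complex.I * (k j : ℂ) := fun j => by
          rw [Fk', ContinuousLinearMap.smul_apply, ellk_single, smul_eq_mul]
        simp only [hev]
        have hstep : ∑ j, (ω j : ℂ) * (fk ω c k q * Complex.I * (k j : ℂ))
            = fk ω c k q * Complex.I * ∑ j, (k j : ℂ) * (ω j : ℂ) := by
          rw [Finset.mul_sum]
          exact Finset.sum_congr rfl fun j _ => by ring
        have hcast : ∑ j, (k j : ℂ) * (ω j : ℂ) = ((zdotR k ω : ℝ) : ℂ) := by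
          simp only [zdotR]
          push_cast
          rfl
        rw [hstep, hcast]
        by_cases hk : k = 0
        · subst hk; simp [fk, hc0]
        · have hNpos : (0 : ℝ) < (znorm k : ℝ) :=
            lt_of_lt_of_le one_pos (one_le_znorm hk)
          have hWpos : 0 < |zdotR k ω| :=
            lt_trans (mul_pos hγ (Real.rpow_pos_of_pos hNpos (-τ))) (hdio k hk)
          have hW0 : ((zdotR k ω : ℝ) : ℂ) ≠ 0 :=
            Complex.ofReal_ne_zero.mpr (abs_pos.mp hWpos)
          rw [fk]
          field_simp

end KAMStmt
end
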